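/- For a connected planar graph G with planar dual G^D and any edge set S ⊆ E, the number of connected components satisfies p(S) = |V| - |S| + p(S^D) - 1, where S^D is the complementary dual edge set. -/

import Mathlib

/-!
Combinatorial-map framework for planar graph duality.  A finite connected graph
embedded in a surface is encoded by its dart set `D`, the vertex rotation `σ`
and the fixed-point-free edge involution `α`; vertices, edges and faces are the
orbits of `σ`, `α` and `α ∘ σ` respectively.  The map is planar (genus 0) iff
it is connected and satisfies Euler's relation `|V| + |F| = |E| + 2`.  The dual
map is obtained by exchanging the roles of the vertex and face permutations;
it keeps the same darts and the same edge involution, so edges of the map and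
of its dual are canonically identified.
-/

structure CombMap where
  D : Type
  [fintypeD : Fintype D]
  [decD : DecidableEq D]
  σ : Equiv.Perm D
  α : Equiv.Perm D
  hinvol : ∀ d, α (α d) = d
  hfree : ∀ d, α d ≠ d

attribute [instance] CombMap.fintypeD CombMap.decD

namespace CombMap

variable (M : CombMap)

/-- orbit relation of a permutation -/
def orbitRel (f : Equiv.Perm M.D) (a b : M.D) : Prop := b = f a

/-- number of vertices: orbits of `σ` -/
noncomputable def nV : ℕ := Nat.card (Quot (M.orbitRel M.σ))

/-- number of edges: orbits of the involution `α` -/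
noncomputable def nE : ℕ := Nat.card (Quot (M.orbitRel M.α))

/-- number of faces: orbits of the face permutation `σ ∘ α` -/
noncomputable def nF : ℕ := Nat.card (Quot (M.orbitRel (M.α.trans M.σ)))

/-- the map is connected -/
def Connected : Prop :=
  ∀ a b : M.D, Relation.EqvGen (fun x y => y = M.σ x ∨ y = M.α x) a b

/-- planar = connected of genus `0`, i.e. Euler's relation holds -/
def Planar : Prop := M.Connected ∧ M.nV + M.nF = M.nE + 2

/-- the dual map: the face permutation becomes the vertex permutation -/
def dual : CombMap where
  D := M.D
  σ := M.α.trans M.σ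
  α := M.α
  hinvol := M.hinvol
  hfree := M.hfree

/-- an edge: an unordered pair `{d, α d}` of darts -/
def Edge : Type := {p : Finset M.D // ∃ d : M.D, p = {d, M.α d}}

noncomputable instance : Fintype M.Edge := by
  classical exact Subtype.fintype _

instance : DecidableEq M.Edge := Subtype.instDecidableEq

/-- the darts belonging to an edge set -/
def darts (S : Finset M.Edge) : Set M.D := {d | ∃ p ∈ S, d ∈ p.val}

/-- `p S`: the number of connected components of the spanning subgraph of the
map with edge set `S`: darts are identified along vertex rotations and along
the involution for darts belonging to `S`. -/
noncomputable def pS (S : Finset M.Edge) : ℕ :=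
  Nat.card (Quot (fun a b : M.D =>
    b = M.σ a ∨ (a ∈ M.darts S ∧ b = M.α a)))

/-- `p(S^D)`: the number of connected components of the spanning subgraph of
the dual map whose edge set is the complement `Sᶜ` (an edge of the dual lies in
`S^D` iff its dual edge is not in `S`). -/
noncomputable def pSdual (S : Finset M.Edge) : ℕ :=
  Nat.card (Quot (fun a b : M.D =>
    b = M.σ (M.α a) ∨ (a ∈ M.darts Sᶜ ∧ b = M.α a)))

/-- the Fortuin–Kasteleyn partition function `Z(M; q, v)` -/
noncomputable def Z (F : Type) [Field F] (q v : F) : F :=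
  ∑ S : Finset M.Edge, v ^ S.card * q ^ M.pS S

end CombMap

/-!
STATEMENT 3: for a connected planar graph `G` and any edge set `S ⊆ E`,
`p(S) = |V| - |S| + p(S^D) - 1`, where `S^D` is the complementary dual edge
set on the dual graph `G^D`.
-/

/-! ### Auxiliary lemmas for the proof -/


/-! ### helpers -/

open Relation
set_option linter.unusedSectionVars false

section Helpers

variable {D : Type} [Finite D]

lemma eqvGen_closure {r p : D → D → Prop} (h : ∀ x y, r x y → EqvGen p x y) :
    ∀ {x y}, EqvGen r x y → EqvGen p x y := by
  intro x y hxy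
  induction hxy with
  | rel x y hr => exact h x y hr
  | refl x => exact EqvGen.refl x
  | symm x y _ ih => exact ih.symm
  | trans x y z _ _ ih1 ih2 => exact ih1.trans _ _ _ ih2

lemma card_quot_le_of_le {r r' : D → D → Prop}
    (h : ∀ x y, r x y → EqvGen r' x y) :
    Nat.card (Quot r') ≤ Nat.card (Quot r) := by
  have hs : Function.Surjective
      (Quot.lift (Quot.mk r') (fun x y hxy => Quot.eqvGen_sound (h x y hxy)) :
        Quot r → Quot r') := by
    intro q
    induction q using Quot.ind with
    | _ x => exact ⟨Quot.mk r x, rfl⟩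
  exact Nat.card_le_card_of_surjective _ hs

lemma card_quot_congr {r r' : D → D → Prop}
    (h : ∀ x y, r x y ↔ r' x y) :
    Nat.card (Quot r) = Nat.card (Quot r') := by
  refine le_antisymm (card_quot_le_of_le ?_) (card_quot_le_of_le ?_)
  · exact fun x y hxy => EqvGen.rel _ _ ((h x y).mpr hxy)
  · exact fun x y hxy => EqvGen.rel _ _ ((h x y).mp hxy)

lemma eqvGen_pair_iff {r : D → D → Prop} {a b : D} {x y : D} :
    EqvGen (fun u v => r u v ∨ (u = a ∧ v = b)) x y ↔
      (EqvGen r x y ∨ (EqvGen r x a ∧ EqvGen r b y) ∨ (EqvGen r x b ∧ EqvGen r a y)) := by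
  constructor
  · intro h
    induction h with
    | rel u v huv =>
      rcases huv with h | ⟨rfl, rfl⟩
      · exact Or.inl (EqvGen.rel _ _ h)
      · exact Or.inr (Or.inl ⟨EqvGen.refl _, EqvGen.refl _⟩)
    | refl u => exact Or.inl (EqvGen.refl u)
    | symm u v _ ih =>
      rcases ih with h | ⟨h1, h2⟩ | ⟨h1, h2⟩
      · exact Or.inl h.symm
      · exact Or.inr (Or.inr ⟨h2.symm, h1.symm⟩)
      · exact Or.inr (Or.inl ⟨h2.symm, h1.symm⟩)
    | trans u v w _ _ ih1 ih2 =>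
      rcases ih1 with h | ⟨h1, h2⟩ | ⟨h1, h2⟩ <;>
        rcases ih2 with g | ⟨g1, g2⟩ | ⟨g1, g2⟩
      · exact Or.inl (h.trans _ _ _ g)
      · exact Or.inr (Or.inl ⟨h.trans _ _ _ g1, g2⟩)
      · exact Or.inr (Or.inr ⟨h.trans _ _ _ g1, g2⟩)
      · exact Or.inr (Or.inl ⟨h1, h2.trans _ _ _ g⟩)
      · exact Or.inr (Or.inl ⟨h1, g2⟩)
      · exact Or.inl (h1.trans _ _ _ g2)
      · exact Or.inr (Or.inr ⟨h1, h2.trans _ _ _ g⟩)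
      · exact Or.inl (h1.trans _ _ _ g2)
      · exact Or.inr (Or.inr ⟨h1, g2⟩)
  · intro h
    have hmono : ∀ u v, r u v → EqvGen (fun u v => r u v ∨ (u = a ∧ v = b)) u v :=
      fun u v huv => EqvGen.rel _ _ (Or.inl huv)
    have hpair : EqvGen (fun u v => r u v ∨ (u = a ∧ v = b)) a b :=
      EqvGen.rel _ _ (Or.inr ⟨rfl, rfl⟩)
    rcases h with h | ⟨h1, h2⟩ | ⟨h1, h2⟩
    · exact eqvGen_closure hmono h
    · exact ((eqvGen_closure hmono h1).trans _ _ _ hpair).trans _ _ _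
        (eqvGen_closure hmono h2)
    · exact ((eqvGen_closure hmono h1).trans _ _ _ hpair.symm).trans _ _ _
        (eqvGen_closure hmono h2)

lemma card_quot_pair_le {r r' : D → D → Prop} {a b : D}
    (h : ∀ x y, EqvGen r' x y ↔ EqvGen (fun u v => r u v ∨ (u = a ∧ v = b)) x y) :
    Nat.card (Quot r) ≤ Nat.card (Quot r') + 1 := by
  classical
  have hwd : ∀ x y, r x y → Quot.mk r' x = Quot.mk r' y := fun x y hxy =>
    Quot.eqvGen_sound ((h x y).mpr (EqvGen.rel _ _ (Or.inl hxy)))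
  set f : Quot r → Quot r' := Quot.lift (Quot.mk r') hwd with hf
  have key : ∀ x y : D, f (Quot.mk r x) = f (Quot.mk r y) →
      Quot.mk r x = Quot.mk r y ∨
        (Quot.mk r x = Quot.mk r a ∧ Quot.mk r y = Quot.mk r b) ∨
        (Quot.mk r x = Quot.mk r b ∧ Quot.mk r y = Quot.mk r a) := by
    intro x y hxy
    have : EqvGen r' x y := Quot.eqvGen_exact hxy
    rcases (eqvGen_pair_iff (r := r) (a := a) (b := b)).mp ((h x y).mp this) with
      hg | ⟨h1, h2⟩ | ⟨h1, h2⟩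
    · exact Or.inl (Quot.eqvGen_sound hg)
    · exact Or.inr (Or.inl ⟨Quot.eqvGen_sound h1, (Quot.eqvGen_sound h2).symm⟩)
    · exact Or.inr (Or.inr ⟨Quot.eqvGen_sound h1, (Quot.eqvGen_sound h2).symm⟩)
  set j : Quot r → Option (Quot r') :=
    fun q => if q = Quot.mk r a then none else some (f q) with hj
  have hinj : Function.Injective j := by
    intro q1 q2 hq
    induction q1 using Quot.ind with
    | _ x =>
    induction q2 using Quot.ind with
    | _ y =>
    by_cases h1 : Quot.mk r x = Quot.mk r a <;> by_cases h2 : Quot.mk r y = Quot.mk r a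
    · exact h1.trans h2.symm
    · rw [hj] at hq; simp only [if_pos h1, if_neg h2] at hq; exact absurd hq (by simp)
    · rw [hj] at hq; simp only [if_pos h2, if_neg h1] at hq; exact absurd hq (by simp)
    · rw [hj] at hq; simp only [if_neg h1, if_neg h2, Option.some_inj] at hq
      rcases key x y hq with hg | ⟨g1, g2⟩ | ⟨g1, g2⟩
      · exact hg
      · exact absurd g1 h1
      · exact absurd g2 h2
  haveI : Finite (Quot r') := Finite.of_surjective (Quot.mk r') Quot.mk_surjective
  haveI := Fintype.ofFinite (Quot r')
  calc Nat.card (Quot r) ≤ Nat.card (Option (Quot r')) :=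
        Nat.card_le_card_of_injective j hinj
    _ = Nat.card (Quot r') + 1 := Finite.card_option

lemma card_quot_pair_eq {r r' : D → D → Prop} {a b : D}
    (h : ∀ x y, EqvGen r' x y ↔ EqvGen (fun u v => r u v ∨ (u = a ∧ v = b)) x y)
    (hab : EqvGen r a b) :
    Nat.card (Quot r') = Nat.card (Quot r) := by
  refine le_antisymm (card_quot_le_of_le ?_) (card_quot_le_of_le ?_)
  · intro x y hxy
    exact (h x y).mpr (EqvGen.rel _ _ (Or.inl hxy))
  · intro x y hxy
    rcases (eqvGen_pair_iff (r := r) (a := a) (b := b)).mp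
      ((h x y).mp (EqvGen.rel _ _ hxy)) with hg | ⟨h1, h2⟩ | ⟨h1, h2⟩
    · exact hg
    · exact (h1.trans _ _ _ hab).trans _ _ _ h2
    · exact (h1.trans _ _ _ hab.symm).trans _ _ _ h2

end Helpers

/-! ### CombMap lemmas -/

namespace CombMap

variable (M : CombMap)

abbrev relP (S : Finset M.Edge) : M.D → M.D → Prop :=
  fun a b => b = M.σ a ∨ (a ∈ M.darts S ∧ b = M.α a)

abbrev relD (S : Finset M.Edge) : M.D → M.D → Prop :=
  fun a b => b = M.σ (M.α a) ∨ (a ∈ M.darts Sᶜ ∧ b = M.α a)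

lemma pS_eq (S : Finset M.Edge) : M.pS S = Nat.card (Quot (M.relP S)) := rfl

lemma pSdual_eq (S : Finset M.Edge) : M.pSdual S = Nat.card (Quot (M.relD S)) := rfl

lemma nV_eq : M.nV = Nat.card (Quot (M.orbitRel M.σ)) := rfl

def edgeOf (x : M.D) : M.Edge := ⟨{x, M.α x}, x, rfl⟩

lemma edgeOf_α (x : M.D) : M.edgeOf (M.α x) = M.edgeOf x := by
  apply Subtype.ext
  show ({M.α x, M.α (M.α x)} : Finset M.D) = {x, M.α x}
  rw [M.hinvol]
  exact Finset.pair_comm _ _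

lemma mem_edgeOf (x : M.D) : x ∈ (M.edgeOf x).val := Finset.mem_insert_self _ _

lemma eq_of_edgeOf {x d : M.D} (h : M.edgeOf x = M.edgeOf d) : x = d ∨ x = M.α d := by
  have hx : x ∈ (M.edgeOf x).val := M.mem_edgeOf x
  rw [h] at hx
  rcases Finset.mem_insert.mp hx with h' | h'
  · exact Or.inl h'
  · exact Or.inr (Finset.mem_singleton.mp h')

lemma mem_darts {S : Finset M.Edge} {x : M.D} : x ∈ M.darts S ↔ M.edgeOf x ∈ S := by
  constructor
  · rintro ⟨p, hp, hx⟩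
    obtain ⟨d, hd⟩ := p.2
    have hx' : x ∈ ({d, M.α d} : Finset M.D) := by rw [← hd]; exact hx
    rcases Finset.mem_insert.mp hx' with rfl | hx''
    · have hpe : p = M.edgeOf x := Subtype.ext hd
      rwa [← hpe]
    · have hx3 : x = M.α d := Finset.mem_singleton.mp hx''
      subst hx3
      have hpe : p = M.edgeOf (M.α d) := by
        apply Subtype.ext
        show p.val = ({M.α d, M.α (M.α d)} : Finset M.D)
        rw [M.hinvol, hd]
        exact Finset.pair_comm _ _
      rwa [← hpe]
  · intro h
    exact ⟨M.edgeOf x, h, M.mem_edgeOf x⟩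

end CombMap

namespace CombMap

variable (M : CombMap)

lemma relP_insert (S : Finset M.Edge) (e : M.Edge) (d₀ : M.D)
    (he2 : e = M.edgeOf d₀) (x y : M.D) :
    EqvGen (M.relP (insert e S)) x y ↔
      EqvGen (fun u v => M.relP S u v ∨ (u = d₀ ∧ v = M.α d₀)) x y := by
  constructor
  · refine eqvGen_closure ?_
    rintro u v (h | ⟨hu, rfl⟩)
    · exact EqvGen.rel _ _ (Or.inl (Or.inl h))
    · rcases Finset.mem_insert.mp (M.mem_darts.mp hu) with h' | h'
      · rw [he2] at h'
        rcases M.eq_of_edgeOf h' with rfl | rfl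
        · exact EqvGen.rel _ _ (Or.inr ⟨rfl, rfl⟩)
        · rw [M.hinvol]
          exact (EqvGen.rel d₀ (M.α d₀)
            (Or.inr ⟨rfl, rfl⟩ : M.relP S d₀ (M.α d₀) ∨ (d₀ = d₀ ∧ M.α d₀ = M.α d₀))).symm _ _
      · exact EqvGen.rel _ _ (Or.inl (Or.inr ⟨M.mem_darts.mpr h', rfl⟩))
  · refine eqvGen_closure ?_
    rintro u v (h | ⟨rfl, rfl⟩)
    · rcases h with h | ⟨hu, rfl⟩
      · exact EqvGen.rel _ _ (Or.inl h)
      · exact EqvGen.rel _ _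
          (Or.inr ⟨M.mem_darts.mpr (Finset.mem_insert_of_mem (M.mem_darts.mp hu)), rfl⟩)
    · refine EqvGen.rel _ _ (Or.inr ⟨?_, rfl⟩)
      exact M.mem_darts.mpr (by rw [← he2]; exact Finset.mem_insert_self _ _)

lemma relD_insert (S : Finset M.Edge) (e : M.Edge) (d₀ : M.D)
    (he : e ∉ S) (he2 : e = M.edgeOf d₀) (x y : M.D) :
    EqvGen (M.relD S) x y ↔
      EqvGen (fun u v => M.relD (insert e S) u v ∨ (u = d₀ ∧ v = M.α d₀)) x y := by
  constructor
  · refine eqvGen_closure ?_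
    rintro u v (h | ⟨hu, rfl⟩)
    · exact EqvGen.rel _ _ (Or.inl (Or.inl h))
    · by_cases h' : M.edgeOf u = e
      · rw [he2] at h'
        rcases M.eq_of_edgeOf h' with rfl | rfl
        · exact EqvGen.rel _ _ (Or.inr ⟨rfl, rfl⟩)
        · rw [M.hinvol]
          exact (EqvGen.rel d₀ (M.α d₀)
            (Or.inr ⟨rfl, rfl⟩ : M.relD (insert e S) d₀ (M.α d₀) ∨ (d₀ = d₀ ∧ M.α d₀ = M.α d₀))).symm _ _
      · have hu' : M.edgeOf u ∉ insert e S := by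
          intro hmem
          rcases Finset.mem_insert.mp hmem with h'' | h''
          · exact h' h''
          · exact (Finset.mem_compl.mp (M.mem_darts.mp hu)) h''
        exact EqvGen.rel _ _
          (Or.inl (Or.inr ⟨M.mem_darts.mpr (Finset.mem_compl.mpr hu'), rfl⟩))
  · refine eqvGen_closure ?_
    rintro u v (h | ⟨rfl, rfl⟩)
    · rcases h with h | ⟨hu, rfl⟩
      · exact EqvGen.rel _ _ (Or.inl h)
      · have : M.edgeOf u ∉ S := fun hmem =>
          (Finset.mem_compl.mp (M.mem_darts.mp hu)) (Finset.mem_insert_of_mem hmem)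
        exact EqvGen.rel _ _
          (Or.inr ⟨M.mem_darts.mpr (Finset.mem_compl.mpr this), rfl⟩)
    · refine EqvGen.rel _ _ (Or.inr ⟨?_, rfl⟩)
      refine M.mem_darts.mpr (Finset.mem_compl.mpr ?_)
      rw [← he2]; exact he

lemma key_lemma (S : Finset M.Edge) (e : M.Edge) (d₀ : M.D)
    (he2 : e = M.edgeOf d₀) :
    EqvGen (M.relD (insert e S)) d₀ (M.α d₀) ∨
      EqvGen (M.relP S) d₀ (M.α d₀) := by
  classical
  set T : Finset M.Edge := insert e S with hT
  have hd₀T : M.edgeOf d₀ ∈ T := by rw [← he2]; exact Finset.mem_insert_self _ _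
  have hinv : Function.Involutive (fun x : M.D => if M.edgeOf x ∈ T then M.α x else x) := by
    intro x
    by_cases h : M.edgeOf x ∈ T
    · simp only [if_pos h]
      rw [M.edgeOf_α]
      simp only [if_pos h, M.hinvol]
    · simp only [if_neg h]
  set π : Equiv.Perm M.D := (hinv.toPerm _).trans M.σ with hπdef
  have hmem : ∀ x, M.edgeOf x ∈ T → π x = M.σ (M.α x) := by
    intro x h
    simp only [hπdef, Equiv.trans_apply, Function.Involutive.coe_toPerm, if_pos h]
  have hnot : ∀ x, M.edgeOf x ∉ T → π x = M.σ x := by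
    intro x h
    simp only [hπdef, Equiv.trans_apply, Function.Involutive.coe_toPerm, if_neg h]
  by_cases hex : ∃ n : ℕ, (π ^ n) d₀ = M.α d₀
  · left
    have hstepD : ∀ x, EqvGen (M.relD T) x (π x) := by
      intro x
      by_cases h : M.edgeOf x ∈ T
      · rw [hmem x h]; exact EqvGen.rel _ _ (Or.inl rfl)
      · rw [hnot x h]
        have h1 : M.relD T x (M.α x) :=
          Or.inr ⟨M.mem_darts.mpr (Finset.mem_compl.mpr h), rfl⟩
        have h2 : M.relD T (M.α x) (M.σ x) := Or.inl (by rw [M.hinvol])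
        exact (EqvGen.rel _ _ h1).trans _ _ _ (EqvGen.rel _ _ h2)
    have horb : ∀ n : ℕ, EqvGen (M.relD T) d₀ ((π ^ n) d₀) := by
      intro n
      induction n with
      | zero => rw [pow_zero]; exact EqvGen.refl _
      | succ n ih =>
        rw [pow_succ', Equiv.Perm.mul_apply]
        exact ih.trans _ _ _ (hstepD _)
    obtain ⟨n, hn⟩ := hex
    rw [← hn]
    exact horb n
  · right
    push_neg at hex
    have hchain : ∀ n : ℕ, EqvGen (M.relP S) ((π ^ (n + 1)) d₀) (M.σ (M.α d₀)) := by
      intro n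
      induction n with
      | zero => rw [pow_one, hmem d₀ hd₀T]; exact EqvGen.refl _
      | succ n ih =>
        rw [pow_succ', Equiv.Perm.mul_apply]
        by_cases hxd : (π ^ (n + 1)) d₀ = d₀
        · rw [hxd, hmem d₀ hd₀T]; exact EqvGen.refl _
        · have hxa : (π ^ (n + 1)) d₀ ≠ M.α d₀ := hex (n + 1)
          set x : M.D := (π ^ (n + 1)) d₀ with hx
          have hstep : EqvGen (M.relP S) x (π x) := by
            by_cases h : M.edgeOf x ∈ T
            · have hS : M.edgeOf x ∈ S := by
                rcases Finset.mem_insert.mp h with h' | h'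
                · exfalso
                  rw [he2] at h'
                  rcases M.eq_of_edgeOf h' with h'' | h''
                  · exact hxd h''
                  · exact hxa h''
                · exact h'
              rw [hmem x h]
              have hr1 : M.relP S x (M.α x) := Or.inr ⟨M.mem_darts.mpr hS, rfl⟩
              have hr2 : M.relP S (M.α x) (M.σ (M.α x)) := Or.inl rfl
              exact (EqvGen.rel _ _ hr1).trans _ _ _ (EqvGen.rel _ _ hr2)
            · rw [hnot x h]; exact EqvGen.rel _ _ (Or.inl rfl)
          exact (hstep.symm _ _).trans _ _ _ ih
    have hpos : 0 < orderOf π := orderOf_pos π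
    obtain ⟨m, hm⟩ := Nat.exists_eq_succ_of_ne_zero (Nat.pos_iff_ne_zero.mp hpos)
    have hm' : orderOf π = m + 1 := hm
    have hret : (π ^ (m + 1)) d₀ = d₀ := by
      rw [← hm', pow_orderOf_eq_one]; rfl
    have h1 := hchain m
    rw [hret] at h1
    have h2 : EqvGen (M.relP S) (M.α d₀) (M.σ (M.α d₀)) := EqvGen.rel _ _ (Or.inl rfl)
    exact h1.trans _ _ _ h2.symm

lemma ineq (M : CombMap) (hc : M.Connected) (S : Finset M.Edge) :
    M.nV + M.pSdual S ≤ M.pS S + S.card + 1 := by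
  classical
  induction S using Finset.induction_on with
  | empty =>
    have h1 : M.nV ≤ M.pS ∅ := by
      rw [nV_eq, pS_eq]
      refine card_quot_le_of_le ?_
      rintro x y (h | ⟨⟨p, hp, _⟩, _⟩)
      · exact EqvGen.rel _ _ h
      · exact absurd hp (Finset.notMem_empty _)
    have h2 : M.pSdual ∅ ≤ 1 := by
      rw [pSdual_eq]
      have hss : Subsingleton (Quot (M.relD (∅ : Finset M.Edge))) := by
        constructor
        intro q1 q2
        induction q1 using Quot.ind with
        | _ x =>
        induction q2 using Quot.ind with
        | _ y =>
        apply Quot.eqvGen_sound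
        refine eqvGen_closure ?_ (hc x y)
        rintro u v (rfl | rfl)
        · have hu : M.relD (∅ : Finset M.Edge) u (M.α u) :=
            Or.inr ⟨M.mem_darts.mpr (by simp), rfl⟩
          have hu2 : M.relD (∅ : Finset M.Edge) (M.α u) (M.σ u) :=
            Or.inl (by rw [M.hinvol])
          exact (EqvGen.rel _ _ hu).trans _ _ _ (EqvGen.rel _ _ hu2)
        · exact EqvGen.rel _ _ (Or.inr ⟨M.mem_darts.mpr (by simp), rfl⟩)
      have : Function.Injective (fun _ : Quot (M.relD (∅ : Finset M.Edge)) => ()) := by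
        intro a b _
        exact Subsingleton.elim a b
      calc Nat.card (Quot (M.relD (∅ : Finset M.Edge))) ≤ Nat.card Unit :=
            Nat.card_le_card_of_injective _ this
        _ = 1 := Nat.card_unique
    simp only [Finset.card_empty]
    omega
  | @insert e S he ih =>
    obtain ⟨d₀, hd⟩ := e.2
    have he2 : e = M.edgeOf d₀ := Subtype.ext hd
    have K1 := M.relP_insert S e d₀ he2
    have K2 := M.relD_insert S e d₀ he he2
    rcases M.key_lemma S e d₀ he2 with hdual | hprim
    · have heq : M.pSdual (insert e S) = M.pSdual S := by
        rw [pSdual_eq, pSdual_eq]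
        exact (card_quot_pair_eq K2 hdual).symm
      have hle : M.pS S ≤ M.pS (insert e S) + 1 := by
        rw [pS_eq, pS_eq]
        exact card_quot_pair_le K1
      rw [Finset.card_insert_of_notMem he, heq]
      omega
    · have heq : M.pS (insert e S) = M.pS S := by
        rw [pS_eq, pS_eq]
        exact card_quot_pair_eq K1 hprim
      have hle : M.pSdual (insert e S) ≤ M.pSdual S + 1 := by
        rw [pSdual_eq, pSdual_eq]
        exact card_quot_pair_le K2
      rw [Finset.card_insert_of_notMem he, heq]
      omega

end CombMap

namespace CombMap

variable (M : CombMap)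

lemma nE_eq : M.nE = Fintype.card M.Edge := by
  rw [← Nat.card_eq_fintype_card]
  have hwd : ∀ a b : M.D, M.orbitRel M.α a b → M.edgeOf a = M.edgeOf b := by
    intro a b hab
    rw [hab]
    exact (M.edgeOf_α a).symm
  refine Nat.card_eq_of_bijective (Quot.lift M.edgeOf hwd) ⟨?_, ?_⟩
  · intro q1 q2
    induction q1 using Quot.ind with
    | _ x =>
    induction q2 using Quot.ind with
    | _ y =>
    intro hxy
    have hxy' : M.edgeOf x = M.edgeOf y := hxy
    rcases M.eq_of_edgeOf hxy' with rfl | rfl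
    · rfl
    · exact Quot.sound (show M.orbitRel M.α (M.α y) y from (M.hinvol y).symm)
  · rintro ⟨p, d, hd⟩
    exact ⟨Quot.mk _ d, Subtype.ext hd.symm⟩

lemma dual_connected (hc : M.Connected) : M.dual.Connected := by
  intro a b
  refine eqvGen_closure ?_ (hc a b)
  rintro u v (rfl | rfl)
  · have h1 : (M.σ u : M.D) = M.dual.σ (M.α u) := by
      show M.σ u = M.σ (M.α (M.α u))
      rw [M.hinvol u]
    have e1 : EqvGen (fun x y : M.D => y = M.dual.σ x ∨ y = M.dual.α x) u (M.α u) :=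
      EqvGen.rel _ _ (Or.inr rfl)
    have e2 : EqvGen (fun x y : M.D => y = M.dual.σ x ∨ y = M.dual.α x) (M.α u) (M.σ u) :=
      EqvGen.rel _ _ (Or.inl h1)
    exact e1.trans _ _ _ e2
  · exact EqvGen.rel _ _ (Or.inr rfl)

lemma dual_pS (S : Finset M.Edge) : M.dual.pS Sᶜ = M.pSdual S := rfl

lemma dual_nV : M.dual.nV = M.nF := rfl

lemma dual_pSdual (S : Finset M.Edge) : M.dual.pSdual Sᶜ = M.pS S := by
  show Nat.card _ = Nat.card _
  apply card_quot_congr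
  intro a b
  show (b = M.σ (M.α (M.α a)) ∨ (a ∈ M.darts Sᶜᶜ ∧ b = M.α a)) ↔
    (b = M.σ a ∨ (a ∈ M.darts S ∧ b = M.α a))
  rw [M.hinvol a]
  constructor
  · rintro (h | ⟨ha, hb⟩)
    · exact Or.inl h
    · refine Or.inr ⟨?_, hb⟩
      have := M.mem_darts.mp ha
      rw [Finset.mem_compl, Finset.mem_compl, not_not] at this
      exact M.mem_darts.mpr this
  · rintro (h | ⟨ha, hb⟩)
    · exact Or.inl h
    · refine Or.inr ⟨?_, hb⟩
      refine M.mem_darts.mpr ?_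
      rw [Finset.mem_compl, Finset.mem_compl, not_not]
      exact M.mem_darts.mp ha

end CombMap


theorem components_duality (M : CombMap) (hM : M.Planar) (S : Finset M.Edge) :
    (M.pS S : ℤ) = (M.nV : ℤ) - S.card + M.pSdual S - 1 := by
  have h1 := CombMap.ineq M hM.1 S
  have h2 := CombMap.ineq M.dual (M.dual_connected hM.1) Sᶜ
  rw [M.dual_pS S, M.dual_pSdual S, M.dual_nV] at h2
  have hc : (Sᶜ : Finset M.dual.Edge).card = Fintype.card M.Edge - S.card := Finset.card_compl S
  have hsc : S.card ≤ Fintype.card M.Edge := S.card_le_univ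
  have hE := M.nE_eq
  have euler := hM.2
  omega
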